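/- Let X be a complex Banach space, 1 ≤ p < ∞, A a closed linear operator on X with domain D(A), B a bounded linear operator on X, and r_1,…,r_n real numbers. Suppose that for every f ∈ L^p(𝕋;X) there exists a unique 2π-periodic strong L^p-solution of Eq. (1). Then for every k ∈ ℤ the operator Δ_k = ikI − A − Σ_{j=1}^n e^{−ikr_j} B : D(A) → X is bijective and has a bounded inverse. -/

import Mathlib

open MeasureTheory Real Complex Filter Finset intervalIntegral
open scoped ENNReal NNReal

noncomputable section

/-- `f` represents an element of `L^p(𝕋; X)`: it is `2π`-periodic and
`p`-integrable over one period `(0, 2π]`. -/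
def PeriodicLp {X : Type*} [NormedAddCommGroup X] (p : ℝ≥0∞) (f : ℝ → X) : Prop :=
  Function.Periodic f (2 * Real.pi) ∧
    MeasureTheory.MemLp f p (MeasureTheory.volume.restrict (Set.Ioc 0 (2 * Real.pi)))

/-- The `k`-th Fourier coefficient `f̂(k) = (1/(2π)) ∫₀^{2π} e^{-iks} f(s) ds`. -/
def fourierCoef {X : Type*} [NormedAddCommGroup X] [NormedSpace ℂ X] (f : ℝ → X) (k : ℤ) : X :=
  (1 / (2 * (Real.pi : ℂ))) •
    ∫ s in (0:ℝ)..(2 * Real.pi), Complex.exp (-Complex.I * (k : ℂ) * (s : ℂ)) • f s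

/-- A family `T ⊆ B(X, Y)` of bounded operators is `R`-bounded: there are `C > 0` and
`q ∈ [1, ∞)` such that for all `m`, all `T₁, …, T_m ∈ T` and `x₁, …, x_m ∈ X`,
`(2^{-m} Σ_{ε ∈ {-1,1}^m} ‖Σ_j ε_j T_j x_j‖^q)^{1/q} ≤
 C (2^{-m} Σ_{ε ∈ {-1,1}^m} ‖Σ_j ε_j x_j‖^q)^{1/q}`, where signs `ε ∈ {-1,1}^m` are
encoded by maps `Fin m → Bool`. -/
def RBounded {X Y : Type*} [NormedAddCommGroup X] [NormedSpace ℂ X]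
    [NormedAddCommGroup Y] [NormedSpace ℂ Y] (T : Set (X →L[ℂ] Y)) : Prop :=
  ∃ C q : ℝ, 0 < C ∧ 1 ≤ q ∧
    ∀ (m : ℕ) (Ts : Fin m → (X →L[ℂ] Y)) (x : Fin m → X), (∀ j, Ts j ∈ T) →
      (((2:ℝ)⁻¹) ^ m * ∑ ε : Fin m → Bool,
          ‖∑ j, (if ε j then (1:ℝ) else -1) • Ts j (x j)‖ ^ q) ^ (1/q) ≤
      C * ((((2:ℝ)⁻¹) ^ m * ∑ ε : Fin m → Bool,
          ‖∑ j, (if ε j then (1:ℝ) else -1) • x j‖ ^ q) ^ (1/q))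

/-- `{M_k}_{k ∈ ℤ}` is an `L^p`-multiplier: for each `f ∈ L^p(𝕋; X)` there is
`u ∈ L^p(𝕋; Y)` with `û(k) = M_k f̂(k)` for all `k`. -/
def IsLpMultiplier {X Y : Type*} [NormedAddCommGroup X] [NormedSpace ℂ X]
    [NormedAddCommGroup Y] [NormedSpace ℂ Y] (p : ℝ≥0∞) (M : ℤ → (X →L[ℂ] Y)) : Prop :=
  ∀ f : ℝ → X, PeriodicLp p f →
    ∃ u : ℝ → Y, PeriodicLp p u ∧ ∀ k : ℤ, fourierCoef u k = M k (fourierCoef f k)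

/-- `u` represents an element of `H^{1,p}(𝕋; X)`: `u ∈ L^p(𝕋; X)` and there is
`v ∈ L^p(𝕋; X)` with `v̂(k) = ik û(k)` for all `k`. -/
def MemH1p {X : Type*} [NormedAddCommGroup X] [NormedSpace ℂ X] (p : ℝ≥0∞) (u : ℝ → X) : Prop :=
  PeriodicLp p u ∧ ∃ v : ℝ → X, PeriodicLp p v ∧
    ∀ k : ℤ, fourierCoef v k = (Complex.I * (k : ℂ)) • fourierCoef u k

/-- The (possibly unbounded) linear operator `A` with domain `D` is closed. -/
def IsClosedOp {X : Type*} [NormedAddCommGroup X] [NormedSpace ℂ X]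
    (D : Submodule ℂ X) (A : D →ₗ[ℂ] X) : Prop :=
  ∀ (x : ℕ → D) (a b : X),
    Filter.Tendsto (fun m => (x m : X)) Filter.atTop (nhds a) →
    Filter.Tendsto (fun m => A (x m)) Filter.atTop (nhds b) →
    ∃ ha : a ∈ D, A ⟨a, ha⟩ = b

/-- `x` is a `2π`-periodic strong `L^p`-solution of
`x′(t) = A x(t) + Σ_{j=1}^n B x(t - r_j) + f(t)`, `x(0) = x(2π)`: it belongs to
`H^{1,p}(𝕋; X)` (with `v` playing the role of `x′`), `x(t) ∈ D(A)` a.e. and the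
equation holds almost everywhere on a period. -/
def IsStrongSolution {X : Type*} [NormedAddCommGroup X] [NormedSpace ℂ X]
    (p : ℝ≥0∞) (D : Submodule ℂ X) (A : D →ₗ[ℂ] X) (B : X →L[ℂ] X)
    {n : ℕ} (r : Fin n → ℝ) (f : ℝ → X) (x : ℝ → X) : Prop :=
  PeriodicLp p x ∧
  ∃ v : ℝ → X, PeriodicLp p v ∧
    (∀ k : ℤ, fourierCoef v k = (Complex.I * (k : ℂ)) • fourierCoef x k) ∧
    ∀ᵐ t ∂(MeasureTheory.volume.restrict (Set.Ioc 0 (2 * Real.pi))),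
      ∃ hx : x t ∈ D, v t = A ⟨x t, hx⟩ + (∑ j, B (x (t - r j))) + f t


section Aux

variable {X Y : Type*} [NormedAddCommGroup X] [NormedSpace ℂ X]
  [NormedAddCommGroup Y] [NormedSpace ℂ Y]

local notation "μT" => MeasureTheory.volume.restrict (Set.Ioc (0:ℝ) (2 * Real.pi))

lemma aux_two_pi_pos : (0:ℝ) < 2 * Real.pi := by positivity

lemma aux_isFinite : IsFiniteMeasure μT := by
  constructor
  rw [Measure.restrict_apply_univ, Real.volume_Ioc]
  exact ENNReal.ofReal_lt_top

lemma aux_neZero : NeZero μT := by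
  constructor
  intro h
  rw [← Measure.measure_univ_eq_zero, Measure.restrict_apply_univ, Real.volume_Ioc] at h
  rw [ENNReal.ofReal_eq_zero] at h
  linarith [aux_two_pi_pos]

lemma aux_ek_periodic (k : ℤ) :
    Function.Periodic (fun t : ℝ => Complex.exp (-Complex.I * (k : ℂ) * (t : ℂ)))
      (2 * Real.pi) := by
  intro t
  have h : (-Complex.I * (k : ℂ) * ((t + 2 * Real.pi : ℝ) : ℂ))
      = -Complex.I * (k : ℂ) * (t : ℂ) + ((-k : ℤ) : ℂ) * (2 * (Real.pi : ℂ) * Complex.I) := by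
    push_cast; ring
  simp only [h, Complex.exp_add, Complex.exp_int_mul_two_pi_mul_I, mul_one]

lemma aux_eI_periodic (k : ℤ) :
    Function.Periodic (fun t : ℝ => Complex.exp (Complex.I * (k : ℂ) * (t : ℂ)))
      (2 * Real.pi) := by
  intro t
  have h : (Complex.I * (k : ℂ) * ((t + 2 * Real.pi : ℝ) : ℂ))
      = Complex.I * (k : ℂ) * (t : ℂ) + ((k : ℤ) : ℂ) * (2 * (Real.pi : ℂ) * Complex.I) := by
    push_cast; ring
  simp only [h, Complex.exp_add, Complex.exp_int_mul_two_pi_mul_I, mul_one]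

lemma aux_norm_ek (k : ℤ) (t : ℝ) :
    ‖Complex.exp (-Complex.I * (k : ℂ) * (t : ℂ))‖ = 1 := by
  rw [Complex.norm_exp]
  simp

lemma aux_norm_eI (k : ℤ) (t : ℝ) :
    ‖Complex.exp (Complex.I * (k : ℂ) * (t : ℂ))‖ = 1 := by
  rw [Complex.norm_exp]
  simp

lemma aux_ek_memtop (k : ℤ) :
    MemLp (fun t : ℝ => Complex.exp (-Complex.I * (k : ℂ) * (t : ℂ))) ⊤ μT := by
  refine memLp_top_of_bound ?_ 1 (Filter.Eventually.of_forall fun t => (aux_norm_ek k t).le)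
  exact (Complex.continuous_exp.comp
    (continuous_const.mul Complex.continuous_ofReal)).aestronglyMeasurable

lemma aux_integrable_ek {x : ℝ → X} (hx : Integrable x μT) (k : ℤ) :
    Integrable (fun t : ℝ => Complex.exp (-Complex.I * (k : ℂ) * (t : ℂ)) • x t) μT :=
  Integrable.smul_of_top_right hx (aux_ek_memtop k)

lemma aux_II_ek {x : ℝ → X} (hx : Integrable x μT) (k : ℤ) :
    IntervalIntegrable (fun t : ℝ => Complex.exp (-Complex.I * (k : ℂ) * (t : ℂ)) • x t)
      volume 0 (2 * Real.pi) := by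
  rw [intervalIntegrable_iff_integrableOn_Ioc_of_le aux_two_pi_pos.le]
  exact aux_integrable_ek hx k

lemma fourierCoef_sub {f g : ℝ → X} (hf : Integrable f μT) (hg : Integrable g μT) (k : ℤ) :
    fourierCoef (fun t => f t - g t) k = fourierCoef f k - fourierCoef g k := by
  unfold fourierCoef
  rw [← smul_sub]
  congr 1
  rw [← intervalIntegral.integral_sub (aux_II_ek hf k) (aux_II_ek hg k)]
  simp [smul_sub]

lemma fourierCoef_finsum {ι : Type*} (s : Finset ι) (f : ι → ℝ → X)
    (h : ∀ i ∈ s, Integrable (f i) μT) (k : ℤ) :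
    fourierCoef (fun t => ∑ i ∈ s, f i t) k = ∑ i ∈ s, fourierCoef (f i) k := by
  unfold fourierCoef
  rw [← Finset.smul_sum]
  congr 1
  rw [← intervalIntegral.integral_finset_sum (fun i hi => aux_II_ek (h i hi) k)]
  congr 1
  ext t
  simp [Finset.smul_sum]

lemma fourierCoef_const_smul (c : ℂ) (f : ℝ → X) (k : ℤ) :
    fourierCoef (fun t => c • f t) k = c • fourierCoef f k := by
  unfold fourierCoef
  rw [smul_comm]
  congr 1
  rw [← intervalIntegral.integral_smul]
  congr 1
  ext t
  rw [smul_comm]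

lemma fourierCoef_clm [CompleteSpace X] [CompleteSpace Y] (B : X →L[ℂ] Y) {x : ℝ → X}
    (hx : Integrable x μT)
    (k : ℤ) : fourierCoef (fun t => B (x t)) k = B (fourierCoef x k) := by
  unfold fourierCoef
  rw [B.map_smul]
  congr 1
  rw [← B.intervalIntegral_comp_comm (aux_II_ek hx k)]
  congr 1
  ext t
  rw [B.map_smul]


lemma aux_coef_exp_smul [CompleteSpace X] (z : X) (k m : ℤ) :
    fourierCoef (fun t : ℝ => Complex.exp (Complex.I * (k : ℂ) * (t : ℂ)) • z) m
      = if m = k then z else 0 := by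
  unfold fourierCoef
  have hint : ∀ s : ℝ,
      Complex.exp (-Complex.I * (m : ℂ) * (s : ℂ)) •
        Complex.exp (Complex.I * (k : ℂ) * (s : ℂ)) • z
      = Complex.exp ((Complex.I * ((k : ℂ) - (m : ℂ))) * (s : ℂ)) • z := by
    intro s
    rw [smul_smul, ← Complex.exp_add]
    congr 2
    ring
  simp only [hint]
  rw [intervalIntegral.integral_smul_const]
  by_cases hmk : m = k
  · subst hmk
    rw [if_pos rfl]
    have h1 : (fun s : ℝ => Complex.exp (Complex.I * ((m : ℂ) - (m : ℂ)) * (s : ℂ)))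
        = fun _ : ℝ => (1 : ℂ) := by
      funext s; simp
    rw [h1, intervalIntegral.integral_const]
    have h2 : (2 * Real.pi - 0 : ℝ) • (1 : ℂ) = (2 * (Real.pi : ℂ)) := by
      rw [Complex.real_smul]
      push_cast
      ring
    rw [h2, smul_smul]
    have hpi : (2 * (Real.pi : ℂ)) ≠ 0 := by
      simp [Real.pi_ne_zero, Complex.ofReal_ne_zero]
    rw [one_div, inv_mul_cancel₀ hpi, one_smul]
  · rw [if_neg hmk]
    have hc : (Complex.I * ((k : ℂ) - (m : ℂ))) ≠ 0 := by
      apply mul_ne_zero Complex.I_ne_zero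
      intro h
      apply hmk
      have h2 : (m : ℂ) = (k : ℂ) := by linear_combination -h
      exact_mod_cast h2
    rw [integral_exp_mul_complex hc]
    have h2 : Complex.exp (Complex.I * ((k : ℂ) - (m : ℂ)) * ((2 * Real.pi : ℝ) : ℂ)) = 1 := by
      have harg : Complex.I * ((k : ℂ) - (m : ℂ)) * ((2 * Real.pi : ℝ) : ℂ)
          = ((k - m : ℤ) : ℂ) * (2 * (Real.pi : ℂ) * Complex.I) := by
        push_cast; ring
      rw [harg, Complex.exp_int_mul_two_pi_mul_I]
    rw [h2]
    simp

lemma aux_periodic_ek_smul {x : ℝ → X} (hx : Function.Periodic x (2 * Real.pi)) (k : ℤ) :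
    Function.Periodic
      (fun t : ℝ => Complex.exp (-Complex.I * (k : ℂ) * (t : ℂ)) • x t) (2 * Real.pi) := by
  intro t
  simp only [aux_ek_periodic k t, hx t]

lemma fourierCoef_translate {x : ℝ → X} (hx : Function.Periodic x (2 * Real.pi)) (r : ℝ)
    (k : ℤ) :
    fourierCoef (fun t => x (t - r)) k
      = Complex.exp (-Complex.I * (k : ℂ) * (r : ℂ)) • fourierCoef x k := by
  unfold fourierCoef
  rw [smul_comm]
  congr 1
  have key : (fun t : ℝ => Complex.exp (-Complex.I * (k : ℂ) * (t : ℂ)) • x (t - r))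
      = fun t : ℝ => (fun u : ℝ =>
          Complex.exp (-Complex.I * (k : ℂ) * ((u + r : ℝ) : ℂ)) • x u) (t - r) := by
    ext t
    simp only []
    congr 2
    push_cast
    ring
  rw [key, intervalIntegral.integral_comp_sub_right
    (fun u : ℝ => Complex.exp (-Complex.I * (k : ℂ) * ((u + r : ℝ) : ℂ)) • x u) r]
  have key2 : ∀ u : ℝ, Complex.exp (-Complex.I * (k : ℂ) * ((u + r : ℝ) : ℂ)) • x u
      = Complex.exp (-Complex.I * (k : ℂ) * (r : ℂ)) •
          (Complex.exp (-Complex.I * (k : ℂ) * (u : ℂ)) • x u) := by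
    intro u
    rw [smul_smul, ← Complex.exp_add]
    congr 2
    push_cast
    ring
  simp only [key2]
  rw [intervalIntegral.integral_smul]
  congr 1
  have hper := aux_periodic_ek_smul hx k
  have h3 := hper.intervalIntegral_add_eq (0 - r) 0
  have e1 : 0 - r + 2 * Real.pi = 2 * Real.pi - r := by ring
  have e2 : (0:ℝ) + 2 * Real.pi = 2 * Real.pi := by ring
  rw [e1, e2] at h3
  have e3 : (0:ℝ) - r = -r := by ring
  rw [e3] at h3
  calc ∫ u in (0:ℝ) - r..2 * Real.pi - r,
        Complex.exp (-Complex.I * (k : ℂ) * (u : ℂ)) • x u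
      = ∫ u in -r..2 * Real.pi - r, Complex.exp (-Complex.I * (k : ℂ) * (u : ℂ)) • x u := by
        rw [e3]
    _ = _ := h3


lemma aux_II_of_periodic {x : ℝ → X} (hper : Function.Periodic x (2 * Real.pi))
    (hint : IntervalIntegrable x volume 0 (2 * Real.pi)) (s : ℝ) :
    IntervalIntegrable x volume s (s + 2 * Real.pi) := by
  set T : ℝ := 2 * Real.pi with hT
  have hTpos : (0:ℝ) < T := aux_two_pi_pos
  -- Step 1 : integrable on [0, 2T]
  have h1 : IntervalIntegrable x volume T (T + T) := by
    have := hint.comp_sub_right T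
    have hx : (fun u : ℝ => x (u - T)) = x := by
      funext u
      exact hper.sub_eq u
    rw [hx] at this
    have e1 : (0:ℝ) + T = T := by ring
    rw [e1] at this
    exact this
  have h2 : IntervalIntegrable x volume 0 (T + T) := hint.trans h1
  -- Step 2 : integrable on [t, t+T] for 0 ≤ t ≤ T
  have h3 : ∀ t : ℝ, 0 ≤ t → t ≤ T → IntervalIntegrable x volume t (t + T) := by
    intro t ht0 htT
    refine h2.mono_set ?_
    rw [Set.uIcc_of_le (by linarith), Set.uIcc_of_le (by linarith)]
    apply Set.Icc_subset_Icc <;> linarith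
  -- Step 3 : general s via periodicity
  set n : ℤ := ⌊s / T⌋ with hn
  set t : ℝ := s - n * T with ht
  have ht0 : 0 ≤ t := by
    have := Int.floor_le (s / T)
    rw [ht]
    have : (n : ℝ) * T ≤ s := by
      rw [hn]
      have h := Int.floor_le (s / T)
      calc (⌊s / T⌋ : ℝ) * T ≤ (s / T) * T := by
            apply mul_le_mul_of_nonneg_right h hTpos.le
        _ = s := by field_simp
    linarith
  have htT : t ≤ T := by
    have h := Int.lt_floor_add_one (s / T)
    have : s < ((n : ℝ) + 1) * T := by
      rw [hn]
      calc s = (s / T) * T := by field_simp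
        _ < ((⌊s / T⌋ : ℝ) + 1) * T := by
            apply mul_lt_mul_of_pos_right h hTpos
    rw [ht]
    push_cast at this ⊢
    nlinarith
  have h4 := (h3 t ht0 htT).comp_sub_right ((n : ℝ) * T)
  have hx2 : (fun u : ℝ => x (u - (n : ℝ) * T)) = x := by
    funext u
    have := hper.sub_zsmul_eq n (x := u)
    rw [zsmul_eq_mul] at this
    exact this
  rw [hx2] at h4
  have e2 : t + (n : ℝ) * T = s := by rw [ht]; ring
  have e3 : t + T + (n : ℝ) * T = s + T := by rw [ht]; ring
  rw [e2, e3] at h4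
  exact h4

lemma aux_integrable_translate {x : ℝ → X} (hper : Function.Periodic x (2 * Real.pi))
    (hint : Integrable x μT) (r : ℝ) :
    Integrable (fun t : ℝ => x (t - r)) μT := by
  have hII : IntervalIntegrable x volume 0 (2 * Real.pi) := by
    rw [intervalIntegrable_iff_integrableOn_Ioc_of_le aux_two_pi_pos.le]
    exact hint
  have h1 := (aux_II_of_periodic hper hII (-r)).comp_sub_right r
  have e1 : -r + r = 0 := by ring
  have e2 : -r + 2 * Real.pi + r = 2 * Real.pi := by ring
  rw [e1, e2] at h1
  rw [intervalIntegrable_iff_integrableOn_Ioc_of_le aux_two_pi_pos.le] at h1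
  exact h1

/-- the Bochner integral of an integrable function a.e. valued in a closed submodule stays
in the submodule, Fourier-coefficient version. -/
lemma fourierCoef_mem_of_closed [CompleteSpace X] (G : Submodule ℂ X)
    (hG : IsClosed (G : Set X)) {x : ℝ → X} (hx : Integrable x μT)
    (hmem : ∀ᵐ t ∂μT, x t ∈ G) (k : ℤ) : fourierCoef x k ∈ G := by
  haveI : IsFiniteMeasure μT := aux_isFinite
  haveI : NeZero μT := aux_neZero
  set W : ℝ → X := fun t => Complex.exp (-Complex.I * (k : ℂ) * (t : ℂ)) • x t with hW
  have hWint : Integrable W μT := aux_integrable_ek hx k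
  have hWmem : ∀ᵐ t ∂μT, W t ∈ G := by
    filter_upwards [hmem] with t ht
    exact G.smul_mem _ ht
  have hconv : Convex ℝ (G : Set X) := (G.restrictScalars ℝ).convex
  have havg : (⨍ t, W t ∂μT) ∈ G := hconv.average_mem hG hWmem hWint
  have h0 : (μT Set.univ).toReal ≠ 0 := by
    rw [Measure.restrict_apply_univ, Real.volume_Ioc, ENNReal.toReal_ofReal (by linarith [aux_two_pi_pos])]
    linarith [aux_two_pi_pos]
  have hin : (∫ t, W t ∂μT) ∈ G := by
    have hsm := (G.restrictScalars ℝ).smul_mem (μT Set.univ).toReal havg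
    rw [average_eq, measureReal_def, smul_inv_smul₀ h0] at hsm
    exact hsm
  unfold fourierCoef
  rw [intervalIntegral.integral_of_le aux_two_pi_pos.le]
  exact G.smul_mem _ hin

lemma fourierCoef_pair [CompleteSpace X] [CompleteSpace Y] {x : ℝ → X} {g : ℝ → Y}
    (hx : Integrable x μT) (hg : Integrable g μT) (k : ℤ) :
    fourierCoef (fun t => (x t, g t)) k = (fourierCoef x k, fourierCoef g k) := by
  have hpair : Integrable (fun t => (x t, g t)) μT := hx.prodMk hg
  have h1 := fourierCoef_clm (ContinuousLinearMap.fst ℂ X Y) hpair k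
  have h2 := fourierCoef_clm (ContinuousLinearMap.snd ℂ X Y) hpair k
  simp only [ContinuousLinearMap.coe_fst', ContinuousLinearMap.coe_snd'] at h1 h2
  ext
  · rw [← h1]
  · rw [← h2]

lemma aux_periodicLp_exp_smul (p : ℝ≥0∞) (z : X) (k : ℤ) :
    PeriodicLp p (fun t : ℝ => Complex.exp (Complex.I * (k : ℂ) * (t : ℂ)) • z) := by
  haveI : IsFiniteMeasure μT := aux_isFinite
  constructor
  · intro t
    simp only [aux_eI_periodic k t]
  · refine MemLp.of_bound ?_ ‖z‖ (Filter.Eventually.of_forall fun t => ?_)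
    · exact ((Complex.continuous_exp.comp
        (continuous_const.mul Complex.continuous_ofReal)).smul continuous_const).aestronglyMeasurable
    · rw [norm_smul, aux_norm_eI, one_mul]

lemma aux_periodicLp_zero (p : ℝ≥0∞) : PeriodicLp p (fun _ : ℝ => (0 : X)) := by
  exact ⟨fun t => rfl, memLp_const 0⟩

lemma aux_periodicLp_const_smul {p : ℝ≥0∞} (c : ℂ) {f : ℝ → X} (hf : PeriodicLp p f) :
    PeriodicLp p (fun t => c • f t) := by
  refine ⟨fun t => by simp only [hf.1 t], ?_⟩
  exact hf.2.const_smul c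

lemma fourierCoef_zero_fun (k : ℤ) : fourierCoef (fun _ : ℝ => (0 : X)) k = 0 := by
  unfold fourierCoef
  simp

end Aux

set_option maxHeartbeats 1600000

/-- If for every `f ∈ L^p(𝕋; X)` there is a unique `2π`-periodic strong
`L^p`-solution of `x′ = Ax + Σ_j Bx(· - r_j) + f`, then for every `k ∈ ℤ` the operator
`Δ_k = ikI - A - Σ_j e^{-ikr_j} B : D(A) → X` is bijective with bounded inverse. -/
theorem solvability_implies_invertible {X : Type*}
    [NormedAddCommGroup X] [NormedSpace ℂ X] [CompleteSpace X]
    (p : ℝ≥0∞) (hp1 : 1 ≤ p) (hp2 : p < ⊤)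
    (D : Submodule ℂ X) (A : D →ₗ[ℂ] X) (hA : IsClosedOp D A)
    (B : X →L[ℂ] X) (n : ℕ) (r : Fin n → ℝ)
    (hsol : ∀ f : ℝ → X, PeriodicLp p f →
      ∃ x : ℝ → X, IsStrongSolution p D A B r f x ∧
        ∀ y : ℝ → X, IsStrongSolution p D A B r f y →
          y =ᵐ[MeasureTheory.volume.restrict (Set.Ioc 0 (2 * Real.pi))] x)
    (k : ℤ) :
    ∃ R : X →L[ℂ] X, ∃ hR : ∀ z : X, R z ∈ D,
      (∀ z : X, (Complex.I * (k : ℂ)) • R z - A ⟨R z, hR z⟩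
        - ∑ j, Complex.exp (-Complex.I * (k : ℂ) * (r j : ℂ)) • B (R z) = z) ∧
      (∀ y : D, R ((Complex.I * (k : ℂ)) • (y : X) - A y
        - ∑ j, Complex.exp (-Complex.I * (k : ℂ) * (r j : ℂ)) • B (y : X)) = (y : X)) := by
  classical
  haveI : IsFiniteMeasure (MeasureTheory.volume.restrict (Set.Ioc (0:ℝ) (2 * Real.pi))) :=
    aux_isFinite
  haveI : NeZero (MeasureTheory.volume.restrict (Set.Ioc (0:ℝ) (2 * Real.pi))) := aux_neZero
  -- the operator Δ_k
  set Δ : D →ₗ[ℂ] X :=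
    (Complex.I * (k : ℂ)) • D.subtype - A
      - ∑ j, Complex.exp (-Complex.I * (k : ℂ) * (r j : ℂ)) • ((B : X →ₗ[ℂ] X).comp D.subtype)
    with hΔdef
  have hΔ : ∀ y : D, Δ y = (Complex.I * (k : ℂ)) • (y : X) - A y
      - ∑ j, Complex.exp (-Complex.I * (k : ℂ) * (r j : ℂ)) • B ((y : X)) := by
    intro y
    simp [hΔdef, LinearMap.sub_apply, LinearMap.smul_apply, LinearMap.sum_apply,
      LinearMap.comp_apply, Submodule.coe_subtype, ContinuousLinearMap.coe_coe]
  -- the graph of A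
  set G : Submodule ℂ (X × X) := LinearMap.range (D.subtype.prod A) with hGdef
  have hGclosed : IsClosed (G : Set (X × X)) := by
    apply IsSeqClosed.isClosed
    intro u q hu hlim
    choose y hy using hu
    have hfst : Filter.Tendsto (fun m => ((y m : D) : X)) Filter.atTop (nhds q.1) := by
      have h1 : (fun m => ((y m : D) : X)) = fun m => (u m).1 := by
        funext m; rw [← hy m]; rfl
      rw [h1]
      exact (continuous_fst.tendsto q).comp hlim
    have hsnd : Filter.Tendsto (fun m => A (y m)) Filter.atTop (nhds q.2) := by
      have h1 : (fun m => A (y m)) = fun m => (u m).2 := by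
        funext m; rw [← hy m]; rfl
      rw [h1]
      exact (continuous_snd.tendsto q).comp hlim
    obtain ⟨ha, hab⟩ := hA y q.1 q.2 hfst hsnd
    exact ⟨⟨q.1, ha⟩, Prod.ext rfl hab⟩
  -- injectivity of Δ
  have hinj0 : ∀ y : D, Δ y = 0 → y = 0 := by
    intro y hy
    set x0 : ℝ → X := fun t : ℝ => Complex.exp (Complex.I * (k : ℂ) * (t : ℂ)) • (y : X)
      with hx0
    have hsolx : IsStrongSolution p D A B r (fun _ => (0:X)) x0 := by
      refine ⟨aux_periodicLp_exp_smul p (y : X) k,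
        fun t => (Complex.I * (k : ℂ)) • x0 t,
        aux_periodicLp_const_smul _ (aux_periodicLp_exp_smul p (y : X) k), ?_, ?_⟩
      · intro m
        rw [fourierCoef_const_smul]
        rw [hx0]
        rw [aux_coef_exp_smul]
        by_cases hmk : m = k
        · subst hmk; simp
        · simp [hmk]
      · refine Filter.Eventually.of_forall fun t => ?_
        have hxt : x0 t ∈ D := D.smul_mem _ y.2
        refine ⟨hxt, ?_⟩
        have hsub : (⟨x0 t, hxt⟩ : D) = Complex.exp (Complex.I * (k : ℂ) * (t : ℂ)) • y := rfl
        rw [hsub, A.map_smul]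
        have hBj : ∀ j, B (x0 (t - r j)) = Complex.exp (Complex.I * (k : ℂ) * (t : ℂ)) •
            (Complex.exp (-Complex.I * (k : ℂ) * (r j : ℂ)) • B ((y : X))) := by
          intro j
          rw [hx0]
          simp only []
          rw [B.map_smul, smul_smul, ← Complex.exp_add]
          congr 2
          push_cast
          ring
        simp only [hBj]
        rw [← Finset.smul_sum]
        have h0 := hΔ y
        rw [hy] at h0
        have h1 : A y + ∑ j, Complex.exp (-Complex.I * (k : ℂ) * (r j : ℂ)) • B ((y : X))
            = (Complex.I * (k : ℂ)) • (y : X) := by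
          have h0' := h0.symm
          rw [sub_sub] at h0'
          exact (sub_eq_zero.mp h0').symm
        rw [← smul_add, h1, hx0]
        simp only []
        rw [smul_comm]
        rw [add_zero]
    obtain ⟨xc, _, huniq⟩ := hsol (fun _ => (0:X)) (aux_periodicLp_zero p)
    have hzero_sol : IsStrongSolution p D A B r (fun _ => (0:X)) (fun _ => (0:X)) := by
      refine ⟨aux_periodicLp_zero p, fun _ => (0:X), aux_periodicLp_zero p, ?_, ?_⟩
      · intro m
        simp [fourierCoef]
      · refine Filter.Eventually.of_forall fun t => ⟨D.zero_mem, ?_⟩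
        have hz : (⟨(0:X), D.zero_mem⟩ : D) = 0 := rfl
        rw [hz, map_zero]
        simp
    have h1 := huniq x0 hsolx
    have h2 := huniq (fun _ => (0:X)) hzero_sol
    have h3 := h1.trans h2.symm
    haveI : (MeasureTheory.ae (MeasureTheory.volume.restrict (Set.Ioc (0:ℝ) (2 * Real.pi)))).NeBot :=
      MeasureTheory.ae_neBot.mpr (aux_neZero).out
    obtain ⟨t, ht⟩ := h3.exists
    have : Complex.exp (Complex.I * (k : ℂ) * (t : ℂ)) • (y : X) = 0 := ht
    rcases smul_eq_zero.mp this with h | h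
    · exact absurd h (Complex.exp_ne_zero _)
    · exact Subtype.ext h
  have hinjΔ : Function.Injective Δ := by
    intro a b hab
    have := hinj0 (a - b) (by rw [map_sub, hab, sub_self])
    exact sub_eq_zero.mp this
  -- surjectivity of Δ
  have hsurj : ∀ z : X, ∃ y : D, Δ y = z := by
    intro z
    set f : ℝ → X := fun t : ℝ => Complex.exp (Complex.I * (k : ℂ) * (t : ℂ)) • z with hfdef
    obtain ⟨x, ⟨hxp, v, hvp, hvk, heq⟩, -⟩ := hsol f (aux_periodicLp_exp_smul p z k)
    have hxint : MeasureTheory.Integrable x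
        (MeasureTheory.volume.restrict (Set.Ioc (0:ℝ) (2 * Real.pi))) := hxp.2.integrable hp1
    have hvint : MeasureTheory.Integrable v
        (MeasureTheory.volume.restrict (Set.Ioc (0:ℝ) (2 * Real.pi))) := hvp.2.integrable hp1
    have hfint : MeasureTheory.Integrable f
        (MeasureTheory.volume.restrict (Set.Ioc (0:ℝ) (2 * Real.pi))) :=
      ((aux_periodicLp_exp_smul p z k).2).integrable hp1
    have hBxint : ∀ j, MeasureTheory.Integrable (fun t : ℝ => B (x (t - r j)))
        (MeasureTheory.volume.restrict (Set.Ioc (0:ℝ) (2 * Real.pi))) := fun j =>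
      B.integrable_comp (aux_integrable_translate hxp.1 hxint (r j))
    have hsumint : MeasureTheory.Integrable (fun t : ℝ => ∑ j, B (x (t - r j)))
        (MeasureTheory.volume.restrict (Set.Ioc (0:ℝ) (2 * Real.pi))) :=
      MeasureTheory.integrable_finset_sum _ (fun j _ => hBxint j)
    set g : ℝ → X := fun t => v t - (∑ j, B (x (t - r j))) - f t with hgdef
    have hgint : MeasureTheory.Integrable g
        (MeasureTheory.volume.restrict (Set.Ioc (0:ℝ) (2 * Real.pi))) :=
      (hvint.sub hsumint).sub hfint
    have hmem : ∀ᵐ t ∂(MeasureTheory.volume.restrict (Set.Ioc (0:ℝ) (2 * Real.pi))),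
        (x t, g t) ∈ G := by
      filter_upwards [heq] with t ht
      obtain ⟨hxt, hvt⟩ := ht
      refine ⟨⟨x t, hxt⟩, ?_⟩
      have hgt : g t = A ⟨x t, hxt⟩ := by
        rw [hgdef]
        simp only []
        rw [hvt]
        abel
      exact Prod.ext rfl hgt.symm
    have hpairint : MeasureTheory.Integrable (fun t => (x t, g t))
        (MeasureTheory.volume.restrict (Set.Ioc (0:ℝ) (2 * Real.pi))) := hxint.prodMk hgint
    have hGc := fourierCoef_mem_of_closed G hGclosed hpairint hmem k
    rw [fourierCoef_pair hxint hgint k] at hGc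
    obtain ⟨y0, hy0⟩ := hGc
    have hy0fst : ((y0 : D) : X) = fourierCoef x k := congrArg Prod.fst hy0
    have hy0snd : A y0 = fourierCoef g k := congrArg Prod.snd hy0
    have hcoefg : fourierCoef g k = (Complex.I * (k : ℂ)) • fourierCoef x k
        - (∑ j, Complex.exp (-Complex.I * (k : ℂ) * (r j : ℂ)) • B (fourierCoef x k)) - z := by
      have hstep1 : fourierCoef g k
          = fourierCoef (fun s => v s - ∑ j, B (x (s - r j))) k - fourierCoef f k := by
        rw [hgdef]
        exact fourierCoef_sub (hvint.sub hsumint) hfint k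
      have hstep2 : fourierCoef (fun s => v s - ∑ j, B (x (s - r j))) k
          = fourierCoef v k - fourierCoef (fun s : ℝ => ∑ j, B (x (s - r j))) k :=
        fourierCoef_sub hvint hsumint k
      have hstep3 : fourierCoef (fun s : ℝ => ∑ j, B (x (s - r j))) k
          = ∑ j, fourierCoef (fun s : ℝ => B (x (s - r j))) k :=
        fourierCoef_finsum _ _ (fun j _ => hBxint j) k
      rw [hstep1, hstep2, hstep3, hvk k]
      have e3 : ∀ j : Fin n, fourierCoef (fun t : ℝ => B (x (t - r j))) k
          = Complex.exp (-Complex.I * (k : ℂ) * (r j : ℂ)) • B (fourierCoef x k) := by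
        intro j
        rw [fourierCoef_clm B (aux_integrable_translate hxp.1 hxint (r j)) k]
        rw [fourierCoef_translate hxp.1 (r j) k]
        rw [B.map_smul]
      simp only [e3]
      rw [hfdef]
      rw [aux_coef_exp_smul]
      rw [if_pos rfl]
    refine ⟨y0, ?_⟩
    rw [hΔ y0, hy0fst, hy0snd, hcoefg]
    abel
  choose S hS using hsurj
  have hSinj : ∀ y : D, S (Δ y) = y := fun y => hinjΔ (hS (Δ y))
  -- linearity
  have hadd : ∀ a b : X, S (a + b) = S a + S b := by
    intro a b
    apply hinjΔ
    calc Δ (S (a + b)) = a + b := hS _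
      _ = Δ (S a) + Δ (S b) := by rw [hS, hS]
      _ = Δ (S a + S b) := (Δ.map_add _ _).symm
  have hsmul : ∀ (c : ℂ) (a : X), S (c • a) = c • S a := by
    intro c a
    apply hinjΔ
    calc Δ (S (c • a)) = c • a := hS _
      _ = c • Δ (S a) := by rw [hS]
      _ = Δ (c • S a) := (Δ.map_smul c (S a)).symm
  set R₀ : X →ₗ[ℂ] X :=
    { toFun := fun z => ((S z : D) : X)
      map_add' := fun a b => by
        show ((S (a + b) : D) : X) = ((S a : D) : X) + ((S b : D) : X)
        rw [hadd]
        rfl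
      map_smul' := fun c a => by
        show ((S (c • a) : D) : X) = c • ((S a : D) : X)
        rw [hsmul]
        rfl } with hR₀def
  have hcont : Continuous R₀ := by
    apply R₀.continuous_of_seq_closed_graph
    intro u z w hu hRu
    have hyw : Filter.Tendsto (fun m => ((S (u m) : D) : X)) Filter.atTop (nhds w) := hRu
    have hAy : ∀ m : ℕ, A (S (u m)) = ((Complex.I * (k : ℂ)) • ((S (u m) : D) : X)
        - ∑ j, Complex.exp (-Complex.I * (k : ℂ) * (r j : ℂ)) • B (((S (u m) : D) : X)))
        - u m := by
      intro m
      have e := hS (u m)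
      rw [hΔ] at e
      rw [sub_right_comm] at e
      have e2 : A (S (u m)) + u m
          = (Complex.I * (k : ℂ)) • ((S (u m) : D) : X)
            - ∑ j, Complex.exp (-Complex.I * (k : ℂ) * (r j : ℂ)) • B (((S (u m) : D) : X)) := by
        rw [add_comm]
        exact (sub_eq_iff_eq_add.mp e).symm
      exact eq_sub_of_add_eq e2
    have hAlim : Filter.Tendsto (fun m => A (S (u m))) Filter.atTop
        (nhds (((Complex.I * (k : ℂ)) • w
          - ∑ j, Complex.exp (-Complex.I * (k : ℂ) * (r j : ℂ)) • B w) - z)) := by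
      have hfun : (fun m => A (S (u m)))
          = fun m => ((Complex.I * (k : ℂ)) • ((S (u m) : D) : X)
            - ∑ j, Complex.exp (-Complex.I * (k : ℂ) * (r j : ℂ)) • B (((S (u m) : D) : X)))
            - u m := funext hAy
      rw [hfun]
      refine Filter.Tendsto.sub (Filter.Tendsto.sub ?_ ?_) hu
      · exact hyw.const_smul _
      · refine tendsto_finset_sum _ fun j _ => ?_
        exact ((B.continuous.tendsto w).comp hyw).const_smul _
    obtain ⟨hw, hAw⟩ := hA (fun m => S (u m)) w _ hyw hAlim
    have hΔw : Δ ⟨w, hw⟩ = z := by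
      rw [hΔ, hAw]
      abel
    have : (⟨w, hw⟩ : D) = S z := hinjΔ (by rw [hΔw, hS])
    have hwz : w = ((S z : D) : X) := congrArg Subtype.val this
    exact hwz
  refine ⟨⟨R₀, hcont⟩, fun z => (S z).2, ?_, ?_⟩
  · intro z
    show (Complex.I * (k : ℂ)) • ((S z : D) : X) - A ⟨((S z : D) : X), (S z).2⟩
        - ∑ j, Complex.exp (-Complex.I * (k : ℂ) * (r j : ℂ)) • B ((S z : D) : X) = z
    rw [Subtype.coe_eta]
    have h := hS z
    rw [hΔ] at h
    exact h
  · intro y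
    have e : (Complex.I * (k : ℂ)) • (y : X) - A y
        - ∑ j, Complex.exp (-Complex.I * (k : ℂ) * (r j : ℂ)) • B ((y : X)) = Δ y :=
      (hΔ y).symm
    show ((S ((Complex.I * (k : ℂ)) • (y : X) - A y
        - ∑ j, Complex.exp (-Complex.I * (k : ℂ) * (r j : ℂ)) • B ((y : X))) : D) : X) = (y : X)
    rw [e, hSinj y]


end
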